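/- For n ≥ 29, if n = a + b with a, b ≥ 1, ‖a‖ + ‖b‖ = ‖n‖, and ‖a‖ ≤ ‖b‖, then a ≤ 2·n^(log₂3 − 1). -/

import Mathlib

/-- `CanRepr n k` : `n` can be written as an expression in `1, +, ·` using `k` ones. -/
inductive CanRepr : ℕ → ℕ → Prop
  | one : CanRepr 1 1
  | add {a b j k : ℕ} : CanRepr a j → CanRepr b k → CanRepr (a + b) (j + k)
  | mul {a b j k : ℕ} : CanRepr a j → CanRepr b k → CanRepr (a * b) (j + k)

/-- Integer complexity `‖n‖`: least number of ones in an expression for `n`. -/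
noncomputable def cpx (n : ℕ) : ℕ := sInf {k | CanRepr n k}

lemma canRepr_pos {m k : ℕ} (h : CanRepr m k) : 1 ≤ m ∧ 1 ≤ k := by
  induction h with
  | one => omega
  | add h1 h2 ih1 ih2 => omega
  | mul h1 h2 ih1 ih2 =>
      refine ⟨Nat.one_le_iff_ne_zero.2 (Nat.mul_ne_zero (by omega) (by omega)), by omega⟩

lemma add_cube {a b j k : ℕ} (ha : 1 ≤ a) (hb : 1 ≤ b) (hj : 1 ≤ j) (hk : 1 ≤ k)
    (hA : a ^ 3 ≤ 3 ^ j) (hB : b ^ 3 ≤ 3 ^ k) : (a + b) ^ 3 ≤ 3 ^ (j + k) := by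
  have key : ∀ x y u v : ℕ, 1 ≤ u → 1 ≤ v → x = 1 → 1 ≤ y →
      x ^ 3 ≤ 3 ^ u → y ^ 3 ≤ 3 ^ v → (x + y) ^ 3 ≤ 3 ^ (u + v) := by
    intro x y u v hu hv hx hy hX hY
    subst hx
    have h3 : 3 * 3 ^ v ≤ 3 ^ (u + v) := by
      calc 3 * 3 ^ v = 3 ^ (1 + v) := by rw [pow_add, pow_one]
        _ ≤ 3 ^ (u + v) := Nat.pow_le_pow_right (by norm_num) (by omega)
    rcases Nat.lt_or_ge y 3 with hy3 | hy3
    · interval_cases y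
      · calc (1 + 1) ^ 3 = 8 := by norm_num
          _ ≤ 3 * 3 ^ v := by
              have h9 : (3:ℕ) ≤ 3 ^ v := by
                calc (3:ℕ) = 3 ^ 1 := by norm_num
                  _ ≤ 3 ^ v := Nat.pow_le_pow_right (by norm_num) hv
              omega
          _ ≤ 3 ^ (u + v) := h3
      · have hv2 : 2 ≤ v := by
          by_contra hcon
          have hv1 : v = 1 := by omega
          subst hv1
          omega
        calc (1 + 2) ^ 3 = 27 := by norm_num
          _ ≤ 3 * 3 ^ v := by
              have : (9:ℕ) ≤ 3 ^ v := by
                calc (9:ℕ) = 3 ^ 2 := by norm_num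
                  _ ≤ 3 ^ v := Nat.pow_le_pow_right (by norm_num) hv2
              omega
          _ ≤ 3 ^ (u + v) := h3
    · have h1 : 3 * y ^ 2 ≤ y ^ 3 := by nlinarith
      have h2 : 9 * y ≤ y ^ 3 := by nlinarith
      calc (1 + y) ^ 3 ≤ 3 * y ^ 3 := by nlinarith
        _ ≤ 3 * 3 ^ v := by omega
        _ ≤ 3 ^ (u + v) := h3
  rcases Nat.lt_or_ge a 2 with ha2 | ha2
  · have : a = 1 := by omega
    exact key a b j k hj hk this hb hA hB
  rcases Nat.lt_or_ge b 2 with hb2 | hb2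
  · have hb1 : b = 1 := by omega
    rw [add_comm a b, add_comm j k]
    exact key b a k j hk hj hb1 ha hB hA
  · calc (a + b) ^ 3 ≤ (a * b) ^ 3 := Nat.pow_le_pow_left (by nlinarith) 3
      _ = a ^ 3 * b ^ 3 := by ring
      _ ≤ 3 ^ j * 3 ^ k := Nat.mul_le_mul hA hB
      _ = 3 ^ (j + k) := (pow_add 3 j k).symm

lemma canRepr_cube {m k : ℕ} (h : CanRepr m k) : m ^ 3 ≤ 3 ^ k := by
  induction h with
  | one => norm_num
  | add h1 h2 ih1 ih2 =>
      exact add_cube (canRepr_pos h1).1 (canRepr_pos h2).1 (canRepr_pos h1).2 (canRepr_pos h2).2 ih1 ih2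
  | mul h1 h2 ih1 ih2 =>
      calc _ = _ ^ 3 * _ ^ 3 := by ring
        _ ≤ 3 ^ _ * 3 ^ _ := Nat.mul_le_mul ih1 ih2
        _ = _ := (pow_add 3 _ _).symm

lemma binary_bound : ∀ n, 2 ≤ n → ∃ k, CanRepr n k ∧ 2 ^ k ≤ n ^ 3 := by
  intro n
  induction n using Nat.strong_induction_on with
  | _ n ih =>
    intro hn
    rcases Nat.lt_or_ge n 4 with h4 | h4
    · interval_cases n
      · exact ⟨2, CanRepr.add CanRepr.one CanRepr.one, by norm_num⟩
      · exact ⟨3, CanRepr.add (CanRepr.add CanRepr.one CanRepr.one) CanRepr.one, by norm_num⟩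
    · obtain ⟨k, hk, hk2⟩ := ih (n / 2) (by omega) (by omega)
      have h22 : CanRepr 2 2 := CanRepr.add CanRepr.one CanRepr.one
      have hmul : CanRepr (2 * (n / 2)) (2 + k) := CanRepr.mul h22 hk
      set m := n / 2 with hm
      rcases Nat.even_or_odd n with he | ho
      · obtain ⟨t, ht⟩ := he
        have hn2 : 2 * m = n := by omega
        refine ⟨2 + k, hn2 ▸ hmul, ?_⟩
        calc 2 ^ (2 + k) = 4 * 2 ^ k := by rw [pow_add]; norm_num
          _ ≤ 4 * m ^ 3 := by omega
          _ ≤ 8 * m ^ 3 := by omega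
          _ = (2 * m) ^ 3 := by ring
          _ = n ^ 3 := by rw [hn2]
      · obtain ⟨t, ht⟩ := ho
        have hn2 : 2 * m + 1 = n := by omega
        refine ⟨2 + k + 1, hn2 ▸ (CanRepr.add hmul CanRepr.one), ?_⟩
        calc 2 ^ (2 + k + 1) = 8 * 2 ^ k := by rw [pow_add, pow_add]; ring
          _ ≤ 8 * m ^ 3 := by omega
          _ = (2 * m) ^ 3 := by ring
          _ ≤ (2 * m + 1) ^ 3 := by nlinarith
          _ = n ^ 3 := by rw [hn2]

lemma canRepr_exists (n : ℕ) (h : 1 ≤ n) : ∃ k, CanRepr n k := by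
  induction n with
  | zero => omega
  | succ m ih =>
    rcases Nat.eq_zero_or_pos m with h0 | h0
    · subst h0; exact ⟨1, CanRepr.one⟩
    · obtain ⟨k, hk⟩ := ih h0
      exact ⟨k + 1, CanRepr.add hk CanRepr.one⟩

lemma cpx_canRepr {n : ℕ} (h : 1 ≤ n) : CanRepr n (cpx n) :=
  Nat.sInf_mem (canRepr_exists n h)

lemma cpx_le {n k : ℕ} (h : CanRepr n k) : cpx n ≤ k := Nat.sInf_le h

lemma rpow_div_pow (x : ℝ) (hx : 0 ≤ x) (p q : ℕ) (hq : (q:ℝ) ≠ 0) :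
    ((x ^ ((p:ℝ)/(q:ℝ))) ^ (q:ℕ)) = x ^ (p:ℕ) := by
  rw [← Real.rpow_natCast (x ^ ((p:ℝ)/q)) q, ← Real.rpow_mul hx, div_mul_cancel₀ _ hq,
    Real.rpow_natCast]

lemma three_rpow (m : ℕ) : ((3:ℝ)) ^ m = ((2:ℝ) ^ m) ^ (Real.logb 2 3) := by
  have h2 : ((2:ℝ) ^ m) ^ (Real.logb 2 3) = ((2:ℝ) ^ (Real.logb 2 3)) ^ m := by
    rw [← Real.rpow_natCast (2:ℝ) m, ← Real.rpow_mul (by norm_num), mul_comm,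
      Real.rpow_mul (by norm_num), Real.rpow_natCast]
  rw [h2, Real.rpow_logb (by norm_num) (by norm_num) (by norm_num)]

lemma logb_le : Real.logb 2 3 ≤ 1587/1000 := by
  rw [Real.logb_le_iff_le_rpow (by norm_num) (by norm_num)]
  have h : ((3:ℝ) ^ (1000:ℕ)) ≤ ((2:ℝ) ^ ((1587:ℝ)/1000)) ^ (1000:ℕ) := by
    rw [show ((1587:ℝ)/1000) = ((1587:ℕ):ℝ)/((1000:ℕ):ℝ) by norm_num,
      rpow_div_pow 2 (by norm_num) 1587 1000 (by norm_num)]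
    exact_mod_cast (show (3:ℕ)^1000 ≤ 2^1587 by
      rw [show (1000:ℕ) = 250*4 by norm_num, show (1587:ℕ) = 226*7+5 by norm_num, pow_mul, pow_add, pow_mul]
      norm_num)
  exact le_of_pow_le_pow_left₀ (by norm_num) (by positivity) h

lemma four_le (x : ℝ) (hx : 29 ≤ x) : (4:ℝ) ≤ x ^ ((413:ℝ)/1000) := by
  have h29 : (4:ℝ) ≤ (29:ℝ) ^ ((413:ℝ)/1000) := by
    apply le_of_pow_le_pow_left₀ (show (1000:ℕ) ≠ 0 by norm_num) (by positivity)
    rw [show ((413:ℝ)/1000) = ((413:ℕ):ℝ)/((1000:ℕ):ℝ) by norm_num,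
      rpow_div_pow 29 (by norm_num) 413 1000 (by norm_num)]
    exact_mod_cast (show (4:ℕ)^1000 ≤ 29^413 by
      rw [show (1000:ℕ) = 250*4 by norm_num, show (413:ℕ) = 206*2+1 by norm_num, pow_mul, pow_add, pow_mul]
      norm_num)
  exact h29.trans (Real.rpow_le_rpow (by norm_num) hx (by norm_num))

-- 4 * x^c ≤ x^2 for x ≥ 29
lemma four_M_le (x : ℝ) (hx : 29 ≤ x) : 4 * x ^ (Real.logb 2 3) ≤ x ^ (2:ℕ) := by
  have hx1 : (1:ℝ) ≤ x := by linarith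
  have h1 : x ^ (Real.logb 2 3) ≤ x ^ ((1587:ℝ)/1000) :=
    Real.rpow_le_rpow_of_exponent_le hx1 logb_le
  have h2 : (4:ℝ) ≤ x ^ ((413:ℝ)/1000) := four_le x hx
  have h3 : x ^ ((413:ℝ)/1000) * x ^ ((1587:ℝ)/1000) = x ^ (2:ℕ) := by
    rw [← Real.rpow_add (by linarith), ← Real.rpow_natCast x 2]
    norm_num
  calc 4 * x ^ (Real.logb 2 3) ≤ 4 * x ^ ((1587:ℝ)/1000) := by
        have := Real.rpow_nonneg (show (0:ℝ) ≤ x by linarith) ((1587:ℝ)/1000)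
        nlinarith
    _ ≤ x ^ ((413:ℝ)/1000) * x ^ ((1587:ℝ)/1000) := by
        have := Real.rpow_nonneg (show (0:ℝ) ≤ x by linarith) ((1587:ℝ)/1000)
        nlinarith
    _ = x ^ (2:ℕ) := h3

theorem smallest_addend (n a b : ℕ) (hn : 29 ≤ n) (ha : 1 ≤ a) (hb : 1 ≤ b)
    (hsum : a + b = n) (hcpx : cpx a + cpx b = cpx n) (hab : cpx a ≤ cpx b) :
    (a : ℝ) ≤ 2 * (n : ℝ) ^ (Real.logb 2 3 - 1) := by
  set c := Real.logb 2 3 with hc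
  set p := cpx a with hp
  set q := cpx b with hq
  -- natural number facts
  have hA : a ^ 3 ≤ 3 ^ p := canRepr_cube (cpx_canRepr ha)
  have hB : b ^ 3 ≤ 3 ^ q := canRepr_cube (cpx_canRepr hb)
  obtain ⟨k, hk, hk2⟩ := binary_bound n (by omega)
  have hN : 2 ^ (p + q) ≤ n ^ 3 := by
    rw [hcpx]
    exact le_trans (Nat.pow_le_pow_right (by norm_num) (cpx_le hk)) hk2
  -- real versions
  have hn0 : (0:ℝ) < n := by positivity
  have hn29 : (29:ℝ) ≤ n := by exact_mod_cast hn
  have hAr : (a:ℝ) ^ 3 ≤ 3 ^ p := by exact_mod_cast hA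
  have hBr : (b:ℝ) ^ 3 ≤ 3 ^ q := by exact_mod_cast hB
  have hNr : (2:ℝ) ^ (p + q) ≤ (n:ℝ) ^ 3 := by exact_mod_cast hN
  have hc0 : (0:ℝ) ≤ c := Real.logb_nonneg (by norm_num) (by norm_num)
  set M := (n:ℝ) ^ c with hM
  have hM0 : 0 ≤ M := Real.rpow_nonneg (le_of_lt hn0) c
  -- 3^(p+q) ≤ M^3
  have h3M : (3:ℝ) ^ (p + q) ≤ M ^ 3 := by
    rw [three_rpow (p + q)]
    calc ((2:ℝ) ^ (p+q)) ^ Real.logb 2 3 ≤ ((n:ℝ) ^ 3) ^ Real.logb 2 3 :=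
          Real.rpow_le_rpow (by positivity) hNr hc0
      _ = M ^ 3 := by
          rw [hM, hc, ← Real.rpow_natCast (n:ℝ) 3, ← Real.rpow_mul (le_of_lt hn0),
            mul_comm, Real.rpow_mul (le_of_lt hn0), Real.rpow_natCast]
  -- ab ≤ M
  have hab_le : (a:ℝ) * b ≤ M := by
    apply le_of_pow_le_pow_left₀ (show (3:ℕ) ≠ 0 by norm_num) hM0
    calc ((a:ℝ) * b) ^ 3 = (a:ℝ)^3 * (b:ℝ)^3 := by ring
      _ ≤ (3:ℝ) ^ p * 3 ^ q := by
          have h1 : (0:ℝ) ≤ (a:ℝ)^3 := by positivity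
          have h2 : (0:ℝ) ≤ (3:ℝ)^p := by positivity
          nlinarith [pow_nonneg (show (0:ℝ) ≤ (b:ℝ) by positivity) 3]
      _ = (3:ℝ) ^ (p + q) := (pow_add 3 p q).symm
      _ ≤ M ^ 3 := h3M
  -- a^2 ≤ M
  have ha2 : (a:ℝ) ^ 2 ≤ M := by
    apply le_of_pow_le_pow_left₀ (show (3:ℕ) ≠ 0 by norm_num) hM0
    calc ((a:ℝ) ^ 2) ^ 3 = ((a:ℝ) ^ 3) ^ 2 := by ring
      _ ≤ ((3:ℝ) ^ p) ^ 2 := by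
          have : (0:ℝ) ≤ (a:ℝ)^3 := by positivity
          nlinarith
      _ = (3:ℝ) ^ (2 * p) := by rw [← pow_mul, mul_comm]
      _ ≤ (3:ℝ) ^ (p + q) := pow_le_pow_right₀ (by norm_num) (by omega)
      _ ≤ M ^ 3 := h3M
  -- 4M ≤ n²
  have h4M : 4 * M ≤ (n:ℝ) ^ (2:ℕ) := four_M_le (n:ℝ) hn29
  -- a ≤ n/2, hence a ≤ b
  have hhalf : 2 * (a:ℝ) ≤ n := by
    have hsq : (2 * (a:ℝ)) ^ 2 ≤ ((n:ℝ)) ^ 2 := by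
      calc (2 * (a:ℝ)) ^ 2 = 4 * (a:ℝ)^2 := by ring
        _ ≤ 4 * M := by linarith
        _ ≤ (n:ℝ) ^ (2:ℕ) := h4M
    exact le_of_pow_le_pow_left₀ (show (2:ℕ) ≠ 0 by norm_num) (le_of_lt hn0) hsq
  have hsumr : (a:ℝ) + b = n := by exact_mod_cast hsum
  have haleb : (a:ℝ) ≤ b := by linarith
  -- finish
  have hfin : (a:ℝ) * n ≤ 2 * M := by
    have ha0 : (0:ℝ) ≤ a := by positivity
    calc (a:ℝ) * n = (a:ℝ) * a + (a:ℝ) * b := by rw [← hsumr]; ring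
      _ ≤ (a:ℝ) * b + (a:ℝ) * b := by nlinarith
      _ = 2 * ((a:ℝ) * b) := by ring
      _ ≤ 2 * M := by linarith
  have hcm1 : (n:ℝ) ^ (c - 1) = M / n := by
    rw [hM, Real.rpow_sub hn0, Real.rpow_one]
  rw [hcm1, mul_div_assoc', le_div_iff₀ hn0]
  linarith
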